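/- For every integer n ≥ 0, the sum Σ_{s=0}^{⌊n/2⌋} C(n, s) · C(n − s, s) is odd; equivalently, the central coefficient (the coefficient of tⁿ) of the polynomial (t² + t + 1)ⁿ is odd. -/

import Mathlib

open Polynomial Finset

/-- mod 2: the central coefficient of `(X²+X+1)^n` is 1. -/
lemma central_coeff_mod2 (n : ℕ) :
    (((X : (ZMod 2)[X]) ^ 2 + X + 1) ^ n).coeff n = 1 := by
  induction n using Nat.strong_induction_on with
  | _ n ih =>
    set f : (ZMod 2)[X] := X ^ 2 + X + 1 with hf
    have hsq : ∀ m : ℕ, f ^ (2 * m) = Polynomial.expand (ZMod 2) 2 (f ^ m) := by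
      intro m
      have h := Polynomial.map_frobenius_expand (p := 2) (f ^ m)
      rw [ZMod.frobenius_zmod] at h
      simp only [Polynomial.map_id] at h
      rw [pow_mul', ← h]
    rcases Nat.even_or_odd n with ⟨m, hm⟩ | ⟨m, hm⟩
    · rcases Nat.eq_zero_or_pos n with h0 | hpos
      · subst h0; simp
      · have hm' : n = 2 * m := by omega
        have hmlt : m < n := by omega
        rw [hm', hsq m, Polynomial.coeff_expand (by norm_num)]
        simp [Nat.mul_div_cancel_left m (by norm_num : 0 < 2), ih m hmlt]
    · have hm' : n = 2 * m + 1 := by omega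
      have hmlt : m < n := by omega
      have hg : f ^ n = Polynomial.expand (ZMod 2) 2 (f ^ m) * f := by
        rw [hm', pow_succ, hsq m]
      set g : (ZMod 2)[X] := Polynomial.expand (ZMod 2) 2 (f ^ m) with hgdef
      have hgodd : ∀ k : ℕ, ¬ (2 ∣ k) → g.coeff k = 0 := by
        intro k hk
        rw [hgdef, Polynomial.coeff_expand (by norm_num)]
        simp [hk]
      have hmul : f ^ n = g * X ^ 2 + g * X + g := by
        rw [hg, hf]; ring
      rw [hmul]
      simp only [Polynomial.coeff_add]
      rw [Polynomial.coeff_mul_X_pow', show g * X = g * X ^ 1 by ring, Polynomial.coeff_mul_X_pow']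
      have h1 : (if 2 ≤ n then g.coeff (n - 2) else 0) = 0 := by
        split
        · apply hgodd; omega
        · rfl
      have h2 : (if 1 ≤ n then g.coeff (n - 1) else 0) = 1 := by
        rw [if_pos (by omega)]
        have : n - 1 = 2 * m := by omega
        rw [this, hgdef, Polynomial.coeff_expand (by norm_num)]
        simp [Nat.mul_div_cancel_left m (by norm_num : 0 < 2), ih m hmlt]
      have h3 : g.coeff n = 0 := hgodd n (by omega)
      rw [h1, h2, h3]
      ring

/-- the central coefficient equals the sum. -/
lemma central_coeff_eq (n : ℕ) :
    (((X : ℤ[X]) ^ 2 + X + 1) ^ n).coeff n =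
      ((∑ s ∈ Finset.range (n / 2 + 1), n.choose s * (n - s).choose s : ℕ) : ℤ) := by
  have hexp : ((X : ℤ[X]) ^ 2 + X + 1) ^ n
      = ∑ s ∈ Finset.range (n + 1),
          (X : ℤ[X]) ^ (2 * s) * (X + 1) ^ (n - s) * (n.choose s : ℤ[X]) := by
    have : ((X : ℤ[X]) ^ 2 + X + 1) = X ^ 2 + (X + 1) := by ring
    rw [this, add_pow]
    apply Finset.sum_congr rfl
    intro s _
    rw [← pow_mul]
  rw [hexp, Polynomial.finset_sum_coeff]
  have hterm : ∀ s ∈ Finset.range (n + 1),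
      ((X : ℤ[X]) ^ (2 * s) * (X + 1) ^ (n - s) * (n.choose s : ℤ[X])).coeff n
        = if 2 * s ≤ n then ((n.choose s * (n - s).choose s : ℕ) : ℤ) else 0 := by
    intro s _
    rw [← Polynomial.C_eq_natCast, Polynomial.coeff_mul_C, mul_comm ((X : ℤ[X]) ^ (2*s)),
      Polynomial.coeff_mul_X_pow']
    split
    · rename_i h
      rw [Polynomial.coeff_X_add_one_pow]
      have : (n - s).choose (n - 2 * s) = (n - s).choose s := by
        have h1 : n - 2 * s ≤ n - s := by omega
        have h2 : (n - s) - (n - 2 * s) = s := by omega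
        rw [← Nat.choose_symm h1, h2]
      rw [this]
      push_cast
      ring
    · simp
  rw [Finset.sum_congr rfl hterm]
  rw [← Finset.sum_subset (Finset.range_subset_range.mpr (by omega : n / 2 + 1 ≤ n + 1))]
  · push_cast
    apply Finset.sum_congr rfl
    intro s hs
    rw [Finset.mem_range] at hs
    rw [if_pos (by omega)]
  · intro s _ hs
    rw [Finset.mem_range, not_lt] at hs
    rw [if_neg (by omega)]

/-- Lemma: for every `n ≥ 0`, the sum `Σ_{s=0}^{⌊n/2⌋} C(n, s) · C(n − s, s)` is odd;
equivalently, the central coefficient (the coefficient of `tⁿ`) of `(t² + t + 1)ⁿ` is odd. -/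
theorem central_coeff_odd (n : ℕ) :
    Odd (∑ s ∈ Finset.range (n / 2 + 1), n.choose s * (n - s).choose s) ∧
    Odd (((Polynomial.X ^ 2 + Polynomial.X + 1 : Polynomial ℤ) ^ n).coeff n) := by
  have hmap : Polynomial.map (Int.castRingHom (ZMod 2))
      (((X : ℤ[X]) ^ 2 + X + 1) ^ n) = ((X : (ZMod 2)[X]) ^ 2 + X + 1) ^ n := by
    push_cast [Polynomial.map_pow, Polynomial.map_add, Polynomial.map_one,
      Polynomial.map_X]
    simp
  have hodd : Odd (((Polynomial.X ^ 2 + Polynomial.X + 1 : Polynomial ℤ) ^ n).coeff n) := by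
    rw [Int.odd_iff]
    by_contra h
    have h2 : (2 : ℤ) ∣ (((X : ℤ[X]) ^ 2 + X + 1) ^ n).coeff n := by omega
    have : ((((X : ℤ[X]) ^ 2 + X + 1) ^ n).coeff n : ZMod 2) = 0 := by
      exact_mod_cast (ZMod.intCast_zmod_eq_zero_iff_dvd _ 2).mpr h2
    have heq : ((((X : ℤ[X]) ^ 2 + X + 1) ^ n).coeff n : ZMod 2)
        = (Polynomial.map (Int.castRingHom (ZMod 2))
            (((X : ℤ[X]) ^ 2 + X + 1) ^ n)).coeff n := by
      rw [Polynomial.coeff_map]; rfl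
    rw [heq, hmap, central_coeff_mod2] at this
    exact one_ne_zero this
  refine ⟨?_, hodd⟩
  have := central_coeff_eq n
  rw [this] at hodd
  exact_mod_cast hodd
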